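/- Let f : ℝⁿ → ℝ be L-smooth with minimizer x* and let ε, δ > 0 satisfy ε ≤ 2L‖x_0 − x*‖² and δ ≤ ε/‖x_0 − x*‖. Consider the inexact gradient descent iteration x_{t+1} = x_t − (1/L)(∇f(x_t) + Δ_t) with ‖Δ_t‖ ≤ δ for all t. If T is the first index with f(x_T) − f(x*) ≤ ε, then ‖x_T − x*‖ ≤ 2‖x_0 − x*‖. -/

import Mathlib

open scoped RealInnerProductSpace
open InnerProductSpace

section Aux

variable {n : ℕ}
local notation "E" => EuclideanSpace ℝ (Fin n)

private lemma hasDerivAt_line' {f : E → ℝ}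
    (hdiff : Differentiable ℝ f) (x v : E) (t : ℝ) :
    HasDerivAt (fun s : ℝ => f (x + s • v)) ⟪gradient f (x + t • v), v⟫ t := by
  have hc : HasDerivAt (fun s : ℝ => x + s • v) v t := by
    simpa using ((hasDerivAt_id t).smul_const v).const_add x
  have hf := (hdiff (x + t • v)).hasFDerivAt
  have h := hf.comp_hasDerivAt t hc
  refine h.congr_deriv ?_
  simp [gradient, toDual_symm_apply]

private lemma descent_lemma' {f : E → ℝ} {L : ℝ} (hL : 0 < L)
    (hdiff : Differentiable ℝ f)
    (hsmooth : ∀ x y, ‖gradient f x - gradient f y‖ ≤ L * ‖x - y‖)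
    (x v : E) :
    f (x + v) ≤ f x + ⟪gradient f x, v⟫ + L / 2 * ‖v‖ ^ 2 := by
  set g : ℝ → ℝ := fun t => f (x + t • v) - t * ⟪gradient f x, v⟫ - L * t ^ 2 / 2 * ‖v‖ ^ 2 with hg
  have hg' : ∀ t : ℝ, HasDerivAt g
      (⟪gradient f (x + t • v), v⟫ - ⟪gradient f x, v⟫ - L * t * ‖v‖ ^ 2) t := by
    intro t
    have h1 := hasDerivAt_line' hdiff x v t
    have h2 : HasDerivAt (fun s : ℝ => s * ⟪gradient f x, v⟫) ⟪gradient f x, v⟫ t := by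
      simpa using (hasDerivAt_id t).mul_const (⟪gradient f x, v⟫)
    have h3 : HasDerivAt (fun s : ℝ => L * s ^ 2 / 2 * ‖v‖ ^ 2) (L * t * ‖v‖ ^ 2) t := by
      have h4 : HasDerivAt (fun s : ℝ => s ^ 2) (2 * t) t := by
        simpa using hasDerivAt_pow 2 t
      have h5 := ((h4.const_mul L).div_const 2).mul_const (‖v‖ ^ 2)
      refine h5.congr_deriv ?_
      ring
    exact (h1.sub h2).sub h3
  have hmono : AntitoneOn g (Set.Icc (0:ℝ) 1) := by
    apply antitoneOn_of_deriv_nonpos (convex_Icc 0 1)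
    · exact fun t _ => ((hg' t).differentiableAt).continuousAt.continuousWithinAt
    · exact fun t _ => ((hg' t).differentiableAt).differentiableWithinAt
    · intro t ht
      rw [interior_Icc] at ht
      rw [(hg' t).deriv]
      have hb : ⟪gradient f (x + t • v) - gradient f x, v⟫ ≤ L * t * ‖v‖ ^ 2 := by
        calc ⟪gradient f (x + t • v) - gradient f x, v⟫
            ≤ ‖gradient f (x + t • v) - gradient f x‖ * ‖v‖ := real_inner_le_norm _ _
          _ ≤ (L * ‖(x + t • v) - x‖) * ‖v‖ := by
              have := hsmooth (x + t • v) x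
              nlinarith [norm_nonneg (gradient f (x + t • v) - gradient f x), norm_nonneg v]
          _ = L * t * ‖v‖ ^ 2 := by
              simp [norm_smul, abs_of_pos ht.1]
              ring
      rw [inner_sub_left] at hb
      linarith
  have h01 := hmono (Set.left_mem_Icc.2 zero_le_one) (Set.right_mem_Icc.2 zero_le_one) zero_le_one
  simp only [hg, one_smul, zero_smul, add_zero, one_pow, mul_one, mul_zero, zero_mul,
    sub_zero, ne_eq, OfNat.ofNat_ne_zero, not_false_eq_true, zero_pow] at h01
  linarith

private lemma convex_grad_ineq' {f : E → ℝ}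
    (hdiff : Differentiable ℝ f) (hconv : ConvexOn ℝ Set.univ f) (x y : E) :
    f x + ⟪gradient f x, y - x⟫ ≤ f y := by
  set v := y - x with hv
  have hgc : ConvexOn ℝ Set.univ (fun t : ℝ => f (x + t • v)) := by
    have h := hconv.comp_affineMap (AffineMap.lineMap x y : ℝ →ᵃ[ℝ] E)
    have he : (fun t : ℝ => f (x + t • v)) = f ∘ (AffineMap.lineMap x y : ℝ →ᵃ[ℝ] E) := by
      funext t
      simp [AffineMap.lineMap_apply, hv]
      rw [add_comm]
    rw [he]
    simpa using h
  have h0 : HasDerivAt (fun t : ℝ => f (x + t • v)) ⟪gradient f x, v⟫ 0 := by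
    simpa using hasDerivAt_line' hdiff x v 0
  have hsl := hgc.le_slope_of_hasDerivAt (Set.mem_univ 0) (Set.mem_univ 1) zero_lt_one h0
  have hs : slope (fun t : ℝ => f (x + t • v)) 0 1 = f (x + v) - f x := by
    rw [slope_def_field]; norm_num
  rw [hs] at hsl
  have hxy : x + v = y := by simp [hv]
  rw [hxy] at hsl
  linarith

private lemma gradient_sub_inner' {f : E → ℝ} (hdiff : Differentiable ℝ f) (c z : E) :
    gradient (fun y => f y - ⟪c, y⟫) z = gradient f z - c := by
  apply HasGradientAt.gradient
  rw [hasGradientAt_iff_hasFDerivAt, map_sub]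
  have h1 : HasFDerivAt f (toDual ℝ E (gradient f z)) z := (hdiff z).hasGradientAt.hasFDerivAt
  have h2 : HasFDerivAt (fun y => ⟪c, y⟫) (toDual ℝ E c) z := by
    have h := (toDual ℝ E c).hasFDerivAt (x := z)
    exact h
  exact h1.sub h2

private lemma linear_convexOn' (c : E) : ConvexOn ℝ Set.univ (fun y : E => -⟪c, y⟫) := by
  refine ⟨convex_univ, fun a _ b _ s t hs ht hst => ?_⟩
  simp only [inner_add_right, real_inner_smul_right, smul_eq_mul]
  apply le_of_eq
  ring

private lemma gradient_min_eq_zero' {f : E → ℝ} (hdiff : Differentiable ℝ f)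
    (xstar : E) (hmin : ∀ y, f xstar ≤ f y) : gradient f xstar = 0 := by
  have hloc : IsLocalMin f xstar := Filter.Eventually.of_forall hmin
  have hf : fderiv ℝ f xstar = 0 := hloc.fderiv_eq_zero
  rw [gradient, hf, map_zero]

private lemma coco' {f : E → ℝ} {L : ℝ} (hL : 0 < L)
    (hdiff : Differentiable ℝ f) (hconv : ConvexOn ℝ Set.univ f)
    (hsmooth : ∀ x y, ‖gradient f x - gradient f y‖ ≤ L * ‖x - y‖)
    (xstar : E) (hmin : ∀ y, f xstar ≤ f y) (w : E) :
    f w - f xstar + ‖gradient f w‖ ^ 2 / (2 * L) ≤ ⟪gradient f w, w - xstar⟫ := by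
  set c := gradient f w with hc
  set φ : E → ℝ := fun y => f y - ⟪c, y⟫ with hφ
  have hφdiff : Differentiable ℝ φ := by
    apply hdiff.sub
    have h := (toDual ℝ E c).differentiable
    exact h
  have hφgrad : ∀ z, gradient φ z = gradient f z - c := fun z => gradient_sub_inner' hdiff c z
  have hφsmooth : ∀ a b, ‖gradient φ a - gradient φ b‖ ≤ L * ‖a - b‖ := by
    intro a b
    rw [hφgrad, hφgrad]
    simpa using hsmooth a b
  have hφconv : ConvexOn ℝ Set.univ φ := by
    have h := hconv.add (linear_convexOn' c)
    exact h.congr (fun y _ => by simp [hφ, sub_eq_add_neg])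
  have hφmin : ∀ y, φ w ≤ φ y := by
    intro y
    have h := convex_grad_ineq' hφdiff hφconv w y
    have hz : gradient φ w = 0 := by rw [hφgrad]; simp [hc]
    rw [hz] at h
    simpa using h
  have hgs : gradient f xstar = 0 := gradient_min_eq_zero' hdiff xstar hmin
  have hφxstar : gradient φ xstar = -c := by rw [hφgrad, hgs, zero_sub]
  have hdesc := descent_lemma' hL hφdiff hφsmooth xstar ((1 / L) • c)
  rw [hφxstar] at hdesc
  have hinner : ⟪-c, (1 / L) • c⟫ = -(1 / L) * ‖c‖ ^ 2 := by
    rw [real_inner_smul_right, inner_neg_left, real_inner_self_eq_norm_sq]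
    ring
  have hnorm : ‖(1 / L) • c‖ ^ 2 = (1 / L) ^ 2 * ‖c‖ ^ 2 := by
    rw [norm_smul, Real.norm_eq_abs, abs_of_pos (by positivity : (0:ℝ) < 1 / L)]
    ring
  rw [hinner, hnorm] at hdesc
  have hwle := hφmin (xstar + (1 / L) • c)
  have key : φ w ≤ φ xstar - ‖c‖ ^ 2 / (2 * L) := by
    have hL' : L ≠ 0 := ne_of_gt hL
    calc φ w ≤ φ (xstar + (1 / L) • c) := hwle
      _ ≤ φ xstar + -(1 / L) * ‖c‖ ^ 2 + L / 2 * ((1 / L) ^ 2 * ‖c‖ ^ 2) := hdesc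
      _ = φ xstar - ‖c‖ ^ 2 / (2 * L) := by field_simp; ring
  have hexp : ⟪c, w - xstar⟫ = ⟪c, w⟫ - ⟪c, xstar⟫ := inner_sub_right c w xstar
  simp only [hφ] at key
  rw [hexp]
  linarith

end Aux

set_option maxHeartbeats 1600000 in
/-- Inexact gradient descent on an `L`-smooth convex function stays bounded:
the first ε-accurate iterate is within distance `2‖x₀ − x*‖` of the optimum. -/
theorem inexact_gd_first_accurate_iterate_bounded {n : ℕ}
    (f : EuclideanSpace ℝ (Fin n) → ℝ) (L ε δ : ℝ) (hL : 0 < L)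
    (hε : 0 < ε) (hδ : 0 < δ)
    (hdiff : Differentiable ℝ f)
    (hconv : ConvexOn ℝ Set.univ f)
    (hsmooth : ∀ x y, ‖gradient f x - gradient f y‖ ≤ L * ‖x - y‖)
    (xstar : EuclideanSpace ℝ (Fin n))
    (hmin : ∀ y, f xstar ≤ f y)
    (x Δ : ℕ → EuclideanSpace ℝ (Fin n))
    (hx0 : x 0 ≠ xstar)
    (hεsmall : ε ≤ 2 * L * ‖x 0 - xstar‖ ^ 2)
    (hδsmall : δ ≤ ε / ‖x 0 - xstar‖)
    (hΔ : ∀ t, ‖Δ t‖ ≤ δ)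
    (hiter : ∀ t, x (t + 1) = x t - (1 / L) • (gradient f (x t) + Δ t))
    (T : ℕ)
    (hT : f (x T) - f xstar ≤ ε)
    (hTfirst : ∀ t < T, ε < f (x t) - f xstar) :
    ‖x T - xstar‖ ≤ 2 * ‖x 0 - xstar‖ := by
  set R := ‖x 0 - xstar‖ with hRdef
  have hR : 0 < R := norm_pos_iff.mpr (sub_ne_zero.2 hx0)
  have hL0 : L ≠ 0 := ne_of_gt hL
  have hR0 : R ≠ 0 := ne_of_gt hR
  have hδR : δ * R ≤ ε := by
    rw [le_div_iff₀ hR] at hδsmall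
    exact hδsmall
  have main : ∀ t, t ≤ T → ‖x t - xstar‖ ≤ R := by
    intro t
    induction t with
    | zero => intro _; exact le_of_eq hRdef.symm
    | succ t ih =>
      intro ht1
      have htT : t < T := Nat.lt_of_succ_le ht1
      have hr : ‖x t - xstar‖ ≤ R := ih (le_of_lt htT)
      have hD : ε < f (x t) - f xstar := hTfirst t htT
      set g := gradient f (x t) with hgdef
      set y := x t - (1 / L) • g with hydef
      -- (i) contraction of the exact step
      have hyx : y - xstar = (x t - xstar) - (1 / L) • g := by
        rw [hydef]; abel
      have hcoco := coco' hL hdiff hconv hsmooth xstar hmin (x t)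
      have hexpand : ‖y - xstar‖ ^ 2
          = ‖x t - xstar‖ ^ 2 - 2 * ((1 / L) * ⟪g, x t - xstar⟫) + (1 / L) ^ 2 * ‖g‖ ^ 2 := by
        rw [hyx, norm_sub_sq_real, real_inner_smul_right, real_inner_comm, norm_smul,
          Real.norm_eq_abs, abs_of_pos (by positivity : (0:ℝ) < 1 / L)]
        ring
      have hgnn : (0:ℝ) ≤ ‖g‖ ^ 2 := by positivity
      have hρsq : ‖y - xstar‖ ^ 2 ≤ ‖x t - xstar‖ ^ 2 - 2 * (f (x t) - f xstar) / L := by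
        rw [hexpand]
        have h2 : f (x t) - f xstar + ‖g‖ ^ 2 / (2 * L) ≤ ⟪g, x t - xstar⟫ := hcoco
        have h3 := mul_le_mul_of_nonneg_left h2
          (le_of_lt (show (0:ℝ) < 2 * (1 / L) by positivity))
        have h4 : 2 * (1 / L) * (f (x t) - f xstar + ‖g‖ ^ 2 / (2 * L))
            = 2 * (f (x t) - f xstar) / L + (1 / L) ^ 2 * ‖g‖ ^ 2 := by
          field_simp
        linarith
      have hρsqR : ‖y - xstar‖ ^ 2 ≤ R ^ 2 - 2 * ε / L := by
        have h1 : ‖x t - xstar‖ ^ 2 ≤ R ^ 2 := by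
          nlinarith [norm_nonneg (x t - xstar)]
        have h2 : 2 * ε / L ≤ 2 * (f (x t) - f xstar) / L := by
          gcongr
        calc ‖y - xstar‖ ^ 2 ≤ ‖x t - xstar‖ ^ 2 - 2 * (f (x t) - f xstar) / L := hρsq
          _ ≤ R ^ 2 - 2 * ε / L := by linarith
      -- 2ε/L ≤ R²  (since ‖y-x*‖² ≥ 0)
      have haR : 2 * ε / L ≤ R ^ 2 := by
        nlinarith [sq_nonneg ‖y - xstar‖]
      -- ρ ≤ R - ε/(L*R)
      have hεL : 2 * ε ≤ R ^ 2 * L := (div_le_iff₀ hL).mp haR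
      have hB : (0:ℝ) ≤ R - ε / (L * R) := by
        rw [sub_nonneg, div_le_iff₀ (by positivity)]
        nlinarith
      have hρle : ‖y - xstar‖ ≤ R - ε / (L * R) := by
        have hsq : ‖y - xstar‖ ^ 2 ≤ (R - ε / (L * R)) ^ 2 := by
          have hexp2 : (R - ε / (L * R)) ^ 2 = R ^ 2 - 2 * ε / L + (ε / (L * R)) ^ 2 := by
            field_simp
            ring
          rw [hexp2]
          nlinarith [sq_nonneg (ε / (L * R))]
        nlinarith [norm_nonneg (y - xstar), hB]
      -- step with error
      have hstep : x (t + 1) - xstar = (y - xstar) - (1 / L) • Δ t := by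
        rw [hiter t, hydef, smul_add]; abel
      have htri : ‖x (t + 1) - xstar‖ ≤ ‖y - xstar‖ + (1 / L) * δ := by
        rw [hstep]
        calc ‖(y - xstar) - (1 / L) • Δ t‖ ≤ ‖y - xstar‖ + ‖(1 / L) • Δ t‖ := norm_sub_le _ _
          _ ≤ ‖y - xstar‖ + (1 / L) * δ := by
              have : ‖(1 / L) • Δ t‖ = (1 / L) * ‖Δ t‖ := by
                rw [norm_smul, Real.norm_eq_abs, abs_of_pos (by positivity : (0:ℝ) < 1 / L)]
              rw [this]
              have := hΔ t
              have h1L : (0:ℝ) ≤ 1 / L := by positivity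
              nlinarith
      have hδL : (1 / L) * δ ≤ ε / (L * R) := by
        rw [show (1 / L) * δ = δ / L by ring, div_le_div_iff₀ hL (by positivity)]
        nlinarith [mul_le_mul_of_nonneg_right hδR hL.le]
      calc ‖x (t + 1) - xstar‖ ≤ ‖y - xstar‖ + (1 / L) * δ := htri
        _ ≤ (R - ε / (L * R)) + ε / (L * R) := by linarith
        _ = R := by ring
  have hfinal : ‖x T - xstar‖ ≤ R := main T le_rfl
  linarith
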